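/- Let (λ₁, x₁) with ‖x₁‖ = 1, λ₁ ≠ 0, be an eigenpair of λ²M + λD + K. Let Q have orthonormal columns with θ₁ the angle between x₁ and span{Q}, cos θ₁ > 0. Let (μ₁, x̂₁) with ‖x̂₁‖ = 1 be an eigenpair of the projected pencil μ²M̂ + μD̂ + K̂ (M̂ = QᴴMQ etc.), and let x̃₁ = Qx̂₁ be the corresponding Ritz vector. Let Â = [[-D̂, -K̂],[I_m, 0]], B̂ = [[M̂, 0],[0, I_m]], and suppose a unitary block decomposition [ŷ₁ᴴ; Ŷᴴ]Â[v̂₁, X̂] = [[α̂, ŝᴴ],[0, L̂]], [ŷ₁ᴴ; Ŷᴴ]B̂[v̂₁, X̂] = [[β̂, t̂ᴴ],[0, N̂]] holds with v̂₁ = [μ₁x̂₁; x̂₁]/√(1+|μ₁|²). If L̂ − λ₁N̂ is invertible with sep(λ₁,(L̂,N̂)) = ‖(L̂ − λ₁N̂)⁻¹‖⁻¹ > 0, then sin∠(x₁, x̃₁) ≤ sin θ₁ + (|λ₁|²‖M‖ + |λ₁|‖D‖ + ‖K‖) tan θ₁ / sep(λ₁,(L̂,N̂)). -/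

import Mathlib

open Matrix Polynomial

/-- Euclidean norm of a complex vector. -/
noncomputable def vnorm {ι : Type*} [Fintype ι] (x : ι → ℂ) : ℝ :=
  Real.sqrt (∑ i, ‖x i‖ ^ 2)

/-- Spectral norm (operator 2-norm) of a complex matrix. -/
noncomputable def spec {ι κ : Type*} [Fintype ι] [Fintype κ] [DecidableEq κ]
    (A : Matrix ι κ ℂ) : ℝ :=
  ‖LinearMap.toContinuousLinearMap (Matrix.toEuclideanLin A)‖

/-- Sine of the angle between two vectors: distance from a/‖a‖ to span{b}. -/
noncomputable def sAngle {ι : Type*} [Fintype ι] (a b : ι → ℂ) : ℝ :=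
  ⨅ α : ℂ, vnorm ((vnorm a)⁻¹ • a - α • b)

variable {ι κ : Type*} [Fintype ι] [Fintype κ]

noncomputable def toE {ι : Type*} [Fintype ι] (x : ι → ℂ) : EuclideanSpace ℂ ι :=
  (WithLp.equiv 2 (ι → ℂ)).symm x

lemma vnorm_eq (x : ι → ℂ) : vnorm x = ‖toE x‖ := by
  rw [EuclideanSpace.norm_eq]; rfl

lemma vnorm_nonneg (x : ι → ℂ) : 0 ≤ vnorm x := Real.sqrt_nonneg _

lemma toE_add (x y : ι → ℂ) : toE (x + y) = toE x + toE y := rfl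
lemma toE_sub (x y : ι → ℂ) : toE (x - y) = toE x - toE y := rfl
lemma toE_smul (a : ℂ) (x : ι → ℂ) : toE (a • x) = a • toE x := rfl
lemma toE_zero : toE (0 : ι → ℂ) = 0 := rfl
lemma toE_neg (x : ι → ℂ) : toE (-x) = -toE x := rfl

lemma vnorm_add_le (x y : ι → ℂ) : vnorm (x + y) ≤ vnorm x + vnorm y := by
  simp only [vnorm_eq, toE_add]; exact norm_add_le _ _

lemma vnorm_smul (a : ℂ) (x : ι → ℂ) : vnorm (a • x) = ‖a‖ * vnorm x := by
  simp only [vnorm_eq, toE_smul, norm_smul]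

lemma vnorm_mulVec_le [DecidableEq κ] (A : Matrix ι κ ℂ) (x : κ → ℂ) :
    vnorm (A *ᵥ x) ≤ spec A * vnorm x := by
  simp only [vnorm_eq]
  rw [show toE (A *ᵥ x) = (LinearMap.toContinuousLinearMap (Matrix.toEuclideanLin A)) (toE x) from rfl]
  exact (LinearMap.toContinuousLinearMap (Matrix.toEuclideanLin A)).le_opNorm _

lemma inner_toE (x y : ι → ℂ) : (inner ℂ (toE x) (toE y) : ℂ) = star x ⬝ᵥ y := by
  simp [PiLp.inner_apply, toE, dotProduct, mul_comm]

lemma vnorm_sq (x : ι → ℂ) : (vnorm x : ℝ) ^ 2 = (star x ⬝ᵥ x).re := by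
  rw [vnorm_eq, ← inner_toE]
  rw [← inner_self_eq_norm_sq (𝕜 := ℂ) (toE x)]
  rfl

lemma vnorm_isom [DecidableEq κ] (Q : Matrix ι κ ℂ) (hQ : Qᴴ * Q = 1) (z : κ → ℂ) :
    vnorm (Q *ᵥ z) = vnorm z := by
  have h : (vnorm (Q *ᵥ z)) ^ 2 = (vnorm z) ^ 2 := by
    rw [vnorm_sq, vnorm_sq, Matrix.star_mulVec, ← Matrix.dotProduct_mulVec,
      Matrix.mulVec_mulVec, hQ, Matrix.one_mulVec]
  nlinarith [vnorm_nonneg (Q *ᵥ z), vnorm_nonneg z]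

lemma vnorm_conjT_mulVec_le [DecidableEq κ] [DecidableEq ι] (Q : Matrix ι κ ℂ)
    (hQ : Qᴴ * Q = 1) (v : ι → ℂ) : vnorm (Qᴴ *ᵥ v) ≤ vnorm v := by
  set w := Qᴴ *ᵥ v with hw
  have key : (vnorm w) ^ 2 = (inner ℂ (toE v) (toE (Q *ᵥ w)) : ℂ).re := by
    rw [vnorm_sq, inner_toE, hw, Matrix.star_mulVec, Matrix.conjTranspose_conjTranspose,
      ← Matrix.dotProduct_mulVec]
  have hcs : (inner ℂ (toE v) (toE (Q *ᵥ w)) : ℂ).re ≤ vnorm v * vnorm w := by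
    calc (inner ℂ (toE v) (toE (Q *ᵥ w)) : ℂ).re ≤ ‖(inner ℂ (toE v) (toE (Q *ᵥ w)) : ℂ)‖ :=
          Complex.re_le_norm _
    _ ≤ ‖toE v‖ * ‖toE (Q *ᵥ w)‖ := norm_inner_le_norm _ _
    _ = vnorm v * vnorm w := by rw [← vnorm_eq, ← vnorm_eq, vnorm_isom Q hQ]
  have h2 : (vnorm w) ^ 2 ≤ vnorm v * vnorm w := key ▸ hcs
  rcases eq_or_lt_of_le (vnorm_nonneg w) with h | h
  · rw [← h]; exact vnorm_nonneg v
  · nlinarith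

lemma vnorm_sq_sum (x : ι → ℂ) : (vnorm x) ^ 2 = ∑ i, ‖x i‖ ^ 2 :=
  Real.sq_sqrt (Finset.sum_nonneg fun i _ => sq_nonneg _)

lemma vnorm_sumElim_sq (a : ι → ℂ) (b : κ → ℂ) :
    (vnorm (Sum.elim a b)) ^ 2 = (vnorm a) ^ 2 + (vnorm b) ^ 2 := by
  rw [vnorm_sq_sum, vnorm_sq_sum, vnorm_sq_sum, Fintype.sum_sum_type]
  simp

lemma vnorm_sumElim_zero (a : ι → ℂ) :
    vnorm (Sum.elim a (0 : κ → ℂ)) = vnorm a := by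
  have h := vnorm_sumElim_sq a (0 : κ → ℂ)
  have h0 : vnorm (0 : κ → ℂ) = 0 := by
    simp [vnorm]
  rw [h0] at h
  nlinarith [vnorm_nonneg (Sum.elim a (0:κ→ℂ)), vnorm_nonneg a]

lemma vnorm_snd_le (w : ι ⊕ κ → ℂ) : vnorm (w ∘ Sum.inr) ≤ vnorm w := by
  have : w = Sum.elim (w ∘ Sum.inl) (w ∘ Sum.inr) := by
    funext i; cases i <;> rfl
  have hw : vnorm w ^ 2 = vnorm (w ∘ Sum.inl) ^ 2 + vnorm (w ∘ Sum.inr) ^ 2 := by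
    conv_lhs => rw [this]
    exact vnorm_sumElim_sq _ _
  nlinarith [vnorm_nonneg (w ∘ Sum.inr), vnorm_nonneg (w ∘ Sum.inl), vnorm_nonneg w]

lemma spec_nonneg {ι κ : Type*} [Fintype ι] [Fintype κ] [DecidableEq κ]
    (A : Matrix ι κ ℂ) : 0 ≤ spec A := norm_nonneg _

lemma vnorm_neg (x : ι → ℂ) : vnorm (-x) = vnorm x := by
  simp [vnorm]

section blocks
variable {p : Type*} [Fintype p] [DecidableEq p] [DecidableEq ι]

lemma cols_orthonormal (v : ι → ℂ) (X : Matrix ι p ℂ)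
    (h : (Matrix.fromCols (Matrix.replicateCol Unit v) X)ᴴ *
      Matrix.fromCols (Matrix.replicateCol Unit v) X = 1) : Xᴴ * X = 1 := by
  rw [Matrix.conjTranspose_fromCols_eq_fromRows_conjTranspose,
    Matrix.fromRows_mul_fromCols, ← Matrix.fromBlocks_one] at h
  exact (Matrix.fromBlocks_inj.mp h).2.2.2

lemma cols_decomp (v : ι → ℂ) (X : Matrix ι p ℂ)
    (h : Matrix.fromCols (Matrix.replicateCol Unit v) X *
      (Matrix.fromCols (Matrix.replicateCol Unit v) X)ᴴ = 1) (w : ι → ℂ) :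
    w = (star v ⬝ᵥ w) • v + X *ᵥ (Xᴴ *ᵥ w) := by
  rw [Matrix.conjTranspose_fromCols_eq_fromRows_conjTranspose,
    Matrix.fromCols_mul_fromRows] at h
  have h2 : (Matrix.replicateCol Unit v * (Matrix.replicateCol Unit v)ᴴ + X * Xᴴ) *ᵥ w = w := by
    rw [h, Matrix.one_mulVec]
  rw [Matrix.add_mulVec] at h2
  have h3 : (Matrix.replicateCol Unit v * (Matrix.replicateCol Unit v)ᴴ) *ᵥ w = (star v ⬝ᵥ w) • v := by
    funext i
    simp [Matrix.mulVec, Matrix.mul_apply, dotProduct, Pi.smul_apply,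
      Finset.sum_mul, mul_comm, mul_assoc, Finset.mul_sum]
    exact Finset.sum_congr rfl fun j _ => by ring
  rw [h3, ← Matrix.mulVec_mulVec] at h2
  exact h2.symm
end blocks


theorem stmt12 {n m : ℕ} (M D K : Matrix (Fin n) (Fin n) ℂ)
    (Q : Matrix (Fin n) (Fin m) ℂ) (hQ : Qᴴ * Q = 1)
    (lam1 : ℂ) (x1 : Fin n → ℂ) (hx1 : vnorm x1 = 1) (hlam : lam1 ≠ 0)
    (heig : (lam1 ^ 2 • M + lam1 • D + K) *ᵥ x1 = 0)
    -- angle θ₁ between x₁ and span{Q}: sin, cos, with cos θ₁ > 0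
    (s c : ℝ) (hs : s = vnorm (x1 - (Q * Qᴴ) *ᵥ x1)) (hc : c = vnorm (Qᴴ *ᵥ x1))
    (hcpos : 0 < c)
    -- projected pencil and its Ritz pair (μ₁, x̂₁)
    (Mh Dh Kh : Matrix (Fin m) (Fin m) ℂ)
    (hMh : Mh = Qᴴ * M * Q) (hDh : Dh = Qᴴ * D * Q) (hKh : Kh = Qᴴ * K * Q)
    (mu1 : ℂ) (xh1 : Fin m → ℂ) (hxh1 : vnorm xh1 = 1)
    (heigh : (mu1 ^ 2 • Mh + mu1 • Dh + Kh) *ᵥ xh1 = 0)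
    -- linearization of the projected pencil
    (Ah Bh : Matrix (Fin m ⊕ Fin m) (Fin m ⊕ Fin m) ℂ)
    (hAh : Ah = Matrix.fromBlocks (-Dh) (-Kh) 1 0)
    (hBh : Bh = Matrix.fromBlocks Mh 0 0 1)
    (vh1 : Fin m ⊕ Fin m → ℂ)
    (hvh1 : vh1 = (Real.sqrt (1 + ‖mu1‖ ^ 2) : ℂ)⁻¹ • Sum.elim (mu1 • xh1) xh1)
    -- unitary block decomposition [v̂₁, X̂], [ŷ₁, Ŷ]
    (yh1 : Fin m ⊕ Fin m → ℂ)
    (Xh Yh : Matrix (Fin m ⊕ Fin m) (Fin (2 * m - 1)) ℂ)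
    (hV1 : (Matrix.fromCols (Matrix.replicateCol Unit vh1) Xh)ᴴ *
        Matrix.fromCols (Matrix.replicateCol Unit vh1) Xh = 1)
    (hV2 : Matrix.fromCols (Matrix.replicateCol Unit vh1) Xh *
        (Matrix.fromCols (Matrix.replicateCol Unit vh1) Xh)ᴴ = 1)
    (hY1 : (Matrix.fromCols (Matrix.replicateCol Unit yh1) Yh)ᴴ *
        Matrix.fromCols (Matrix.replicateCol Unit yh1) Yh = 1)
    (hY2 : Matrix.fromCols (Matrix.replicateCol Unit yh1) Yh *
        (Matrix.fromCols (Matrix.replicateCol Unit yh1) Yh)ᴴ = 1)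
    (hAz : (Yhᴴ * Ah) *ᵥ vh1 = 0) (hBz : (Yhᴴ * Bh) *ᵥ vh1 = 0)
    (Lh Nh : Matrix (Fin (2 * m - 1)) (Fin (2 * m - 1)) ℂ)
    (hLh : Lh = Yhᴴ * Ah * Xh) (hNh : Nh = Yhᴴ * Bh * Xh)
    (hsep : IsUnit (Lh - lam1 • Nh)) :
    sAngle x1 (Q *ᵥ xh1) ≤ s +
      (‖lam1‖ ^ 2 * spec M + ‖lam1‖ * spec D + spec K) *
        (s / c) / (spec (Lh - lam1 • Nh)⁻¹)⁻¹ := by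
  set u : Fin m → ℂ := Qᴴ *ᵥ x1 with hu
  set e : Fin n → ℂ := x1 - (Q * Qᴴ) *ᵥ x1 with he
  set R : ℝ := ‖lam1‖ ^ 2 * spec M + ‖lam1‖ * spec D + spec K with hR
  have hx1e : x1 = e + Q *ᵥ u := by
    rw [he, hu, ← Matrix.mulVec_mulVec]
    exact (sub_add_cancel _ _).symm
  have hse : s = vnorm e := hs
  have hs0 : 0 ≤ s := hse ▸ vnorm_nonneg e
  have hR0 : 0 ≤ R := by
    rw [hR]
    have hM := spec_nonneg M; have hD := spec_nonneg D; have hK := spec_nonneg K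
    have hl := norm_nonneg lam1
    have h2 : (0:ℝ) ≤ ‖lam1‖ ^ 2 := sq_nonneg _
    nlinarith
  -- residual bound
  set Pm : Matrix (Fin n) (Fin n) ℂ := lam1 ^ 2 • M + lam1 • D + K with hPmdef
  have hres : vnorm ((lam1 ^ 2 • Mh + lam1 • Dh + Kh) *ᵥ u) ≤ R * s := by
    have h1 : lam1 ^ 2 • Mh + lam1 • Dh + Kh = Qᴴ * Pm * Q := by
      rw [hMh, hDh, hKh, hPmdef]
      simp [Matrix.mul_add, Matrix.add_mul, Matrix.mul_smul, Matrix.smul_mul, Matrix.mul_assoc]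
    have hQu : Q *ᵥ u = x1 - e := by rw [hx1e]; abel
    have h3 : Pm *ᵥ (Q *ᵥ u) = -(Pm *ᵥ e) := by
      rw [hQu, Matrix.mulVec_sub, heig, zero_sub]
    have h2 : (lam1 ^ 2 • Mh + lam1 • Dh + Kh) *ᵥ u = Qᴴ *ᵥ (-(Pm *ᵥ e)) := by
      rw [h1, ← Matrix.mulVec_mulVec, ← Matrix.mulVec_mulVec, h3]
    have hd : vnorm (Pm *ᵥ e) ≤ R * vnorm e := by
      rw [hPmdef, Matrix.add_mulVec, Matrix.add_mulVec, Matrix.smul_mulVec,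
        Matrix.smul_mulVec]
      have t1 := vnorm_add_le (lam1 ^ 2 • (M *ᵥ e) + lam1 • (D *ᵥ e)) (K *ᵥ e)
      have t2 := vnorm_add_le (lam1 ^ 2 • (M *ᵥ e)) (lam1 • (D *ᵥ e))
      have t3 := vnorm_smul (lam1 ^ 2) (M *ᵥ e)
      have t4 := vnorm_smul lam1 (D *ᵥ e)
      have b1 := vnorm_mulVec_le M e
      have b2 := vnorm_mulVec_le D e
      have b3 := vnorm_mulVec_le K e
      have hab : ‖lam1 ^ 2‖ = ‖lam1‖ ^ 2 := norm_pow _ _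
      have hl := norm_nonneg lam1
      rw [hab] at t3
      rw [hR]
      nlinarith [sq_nonneg ‖lam1‖, vnorm_nonneg (M *ᵥ e), vnorm_nonneg (D *ᵥ e)]
    calc vnorm ((lam1 ^ 2 • Mh + lam1 • Dh + Kh) *ᵥ u)
        = vnorm (Qᴴ *ᵥ (-(Pm *ᵥ e))) := by rw [h2]
      _ ≤ vnorm (-(Pm *ᵥ e)) := vnorm_conjT_mulVec_le Q hQ _
      _ = vnorm (Pm *ᵥ e) := vnorm_neg _
      _ ≤ R * vnorm e := hd
      _ = R * s := by rw [hse]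
  -- linearized residual
  set w : Fin m ⊕ Fin m → ℂ := Sum.elim (lam1 • u) u with hw
  have hABw : Ah *ᵥ w - lam1 • (Bh *ᵥ w) =
      Sum.elim (-((lam1 ^ 2 • Mh + lam1 • Dh + Kh) *ᵥ u)) 0 := by
    funext i
    have hwl : w ∘ Sum.inl = lam1 • u := rfl
    have hwr : w ∘ Sum.inr = u := rfl
    rw [hAh, hBh, Matrix.fromBlocks_mulVec, Matrix.fromBlocks_mulVec, hwl, hwr]
    cases i with
    | inl i =>
        simp [Matrix.add_mulVec, Matrix.smul_mulVec, Matrix.neg_mulVec,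
          Matrix.zero_mulVec, Matrix.one_mulVec, Matrix.mulVec_smul, Matrix.mulVec_add]
        ring
    | inr i =>
        simp [Matrix.zero_mulVec, Matrix.one_mulVec, Matrix.mulVec_smul]
  set g : Fin (2 * m - 1) → ℂ := Xhᴴ *ᵥ w with hg
  set γ : ℂ := star vh1 ⬝ᵥ w with hγ
  have hdecomp : w = γ • vh1 + Xh *ᵥ g := cols_decomp vh1 Xh hV2 w
  have hLNg : (Lh - lam1 • Nh) *ᵥ g =
      Yhᴴ *ᵥ (Sum.elim (-((lam1 ^ 2 • Mh + lam1 • Dh + Kh) *ᵥ u)) 0) := by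
    have hYA : Yhᴴ *ᵥ (Ah *ᵥ w) = Lh *ᵥ g := by
      conv_lhs => rw [hdecomp]
      rw [Matrix.mulVec_add, Matrix.mulVec_smul, Matrix.mulVec_add, Matrix.mulVec_smul,
        Matrix.mulVec_mulVec, hAz, Matrix.mulVec_mulVec, Matrix.mulVec_mulVec, hLh]
      simp
    have hYB : Yhᴴ *ᵥ (Bh *ᵥ w) = Nh *ᵥ g := by
      conv_lhs => rw [hdecomp]
      rw [Matrix.mulVec_add, Matrix.mulVec_smul, Matrix.mulVec_add, Matrix.mulVec_smul,
        Matrix.mulVec_mulVec, hBz, Matrix.mulVec_mulVec, Matrix.mulVec_mulVec, hNh]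
      simp
    rw [← hABw, Matrix.mulVec_sub, Matrix.mulVec_smul, hYA, hYB, Matrix.sub_mulVec,
      Matrix.smul_mulVec]
  have hinv0 : 0 ≤ spec ((Lh - lam1 • Nh)⁻¹) := spec_nonneg _
  have hgle : vnorm g ≤ spec ((Lh - lam1 • Nh)⁻¹) * (R * s) := by
    have hdet := (Matrix.isUnit_iff_isUnit_det _).mp hsep
    have hinv : (Lh - lam1 • Nh)⁻¹ * (Lh - lam1 • Nh) = 1 := Matrix.nonsing_inv_mul _ hdet
    have hgeq : g = (Lh - lam1 • Nh)⁻¹ *ᵥ ((Lh - lam1 • Nh) *ᵥ g) := by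
      rw [Matrix.mulVec_mulVec, hinv, Matrix.one_mulVec]
    have hrle : vnorm ((Lh - lam1 • Nh) *ᵥ g) ≤ R * s := by
      rw [hLNg]
      calc vnorm (Yhᴴ *ᵥ (Sum.elim (-((lam1 ^ 2 • Mh + lam1 • Dh + Kh) *ᵥ u)) 0))
          ≤ vnorm (Sum.elim (-((lam1 ^ 2 • Mh + lam1 • Dh + Kh) *ᵥ u)) (0 : Fin m → ℂ)) :=
            vnorm_conjT_mulVec_le Yh (cols_orthonormal yh1 Yh hY1) _
        _ = vnorm (-((lam1 ^ 2 • Mh + lam1 • Dh + Kh) *ᵥ u)) := vnorm_sumElim_zero _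
        _ = vnorm ((lam1 ^ 2 • Mh + lam1 • Dh + Kh) *ᵥ u) := vnorm_neg _
        _ ≤ R * s := hres
    calc vnorm g = vnorm ((Lh - lam1 • Nh)⁻¹ *ᵥ ((Lh - lam1 • Nh) *ᵥ g)) := by rw [← hgeq]
      _ ≤ spec ((Lh - lam1 • Nh)⁻¹) * vnorm ((Lh - lam1 • Nh) *ᵥ g) := vnorm_mulVec_le _ _
      _ ≤ spec ((Lh - lam1 • Nh)⁻¹) * (R * s) := mul_le_mul_of_nonneg_left hrle hinv0
  -- second block
  set α : ℂ := γ * ((Real.sqrt (1 + ‖mu1‖ ^ 2) : ℂ))⁻¹ with hα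
  have hub : u - α • xh1 = (Xh *ᵥ g) ∘ Sum.inr := by
    funext i
    have h := congrFun hdecomp (Sum.inr i)
    rw [hvh1] at h
    simp only [Pi.add_apply, Pi.smul_apply, Sum.elim_inr, smul_eq_mul] at h
    have hwi : w (Sum.inr i) = u i := rfl
    rw [hwi] at h
    simp only [Pi.sub_apply, Pi.smul_apply, smul_eq_mul, Function.comp_apply, hα]
    linear_combination h
  have hfin : vnorm (u - α • xh1) ≤ spec ((Lh - lam1 • Nh)⁻¹) * (R * s) := by
    rw [hub]
    calc vnorm ((Xh *ᵥ g) ∘ Sum.inr) ≤ vnorm (Xh *ᵥ g) := vnorm_snd_le _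
    _ = vnorm g := vnorm_isom Xh (cols_orthonormal vh1 Xh hV1) g
    _ ≤ _ := hgle
  -- assemble
  have hc1 : c ≤ 1 := by
    rw [hc]
    calc vnorm (Qᴴ *ᵥ x1) ≤ vnorm x1 := vnorm_conjT_mulVec_le Q hQ x1
      _ = 1 := hx1
  have hangle : sAngle x1 (Q *ᵥ xh1) ≤ vnorm ((vnorm x1)⁻¹ • x1 - α • (Q *ᵥ xh1)) := by
    apply ciInf_le
    refine ⟨0, ?_⟩
    rintro _ ⟨β, rfl⟩
    exact vnorm_nonneg _
  rw [hx1, inv_one, one_smul] at hangle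
  have hsplit : x1 - α • (Q *ᵥ xh1) = e + Q *ᵥ (u - α • xh1) := by
    rw [Matrix.mulVec_sub, Matrix.mulVec_smul]
    conv_lhs => rw [hx1e]
    abel
  have hstep : vnorm (x1 - α • (Q *ᵥ xh1)) ≤ s + spec ((Lh - lam1 • Nh)⁻¹) * (R * s) := by
    rw [hsplit]
    calc vnorm (e + Q *ᵥ (u - α • xh1)) ≤ vnorm e + vnorm (Q *ᵥ (u - α • xh1)) :=
          vnorm_add_le _ _
      _ = vnorm e + vnorm (u - α • xh1) := by rw [vnorm_isom Q hQ]
      _ ≤ s + spec ((Lh - lam1 • Nh)⁻¹) * (R * s) := by linarith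
  refine le_trans hangle (le_trans hstep ?_)
  rw [div_eq_mul_inv, inv_inv]
  have hsc : s ≤ s / c := by
    rw [le_div_iff₀ hcpos]; nlinarith
  have h1 : R * s ≤ R * (s / c) := mul_le_mul_of_nonneg_left hsc hR0
  have h2 := mul_le_mul_of_nonneg_left h1 hinv0
  ring_nf at h2 ⊢
  linarith
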